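/- Let n ≥ 4, let I' be an order ideal of F₃(n) with max ⋃ I' = n, and let N' > 0 and ε₀ > 0 be real numbers. Then there exist real numbers 0 < t₁ < t₂ < ⋯ < t_n with t₁ < ε₀ such that ∏_{i∈f} t_i < N' for every f ∈ I', ∏_{i∈f} t_i > N' for every f ∈ F₃(n)∖I', and moreover t₁·t_{n−2}·t_{n−1}·t_n < N'. -/

import Mathlib

/-- The 4-element set `{i, i+1, j, j+1}`, denoted `(i,j)` in the paper. -/
def pairSet (i j : ℕ) : Finset ℕ := {i, i + 1, j, j + 1}

/-- Membership in the collection `F₃(n)` of 4-element subsets of `{1,…,n}`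
of the form `{i, i+1, j, j+1}` with `1 ≤ i`, `i+2 ≤ j`, `j+1 ≤ n`. -/
def memF3 (n : ℕ) (f : Finset ℕ) : Prop :=
  ∃ i j : ℕ, 1 ≤ i ∧ i + 2 ≤ j ∧ j + 1 ≤ n ∧ f = pairSet i j

/-- The partial order `⪯` on finite subsets of `ℕ` of equal cardinality:
componentwise comparison of the increasingly sorted lists of elements. -/
def squeezedLE (f g : Finset ℕ) : Prop :=
  List.Forall₂ (· ≤ ·) (f.sort (· ≤ ·)) (g.sort (· ≤ ·))

/-- `I` is an order ideal of `F₃(n)` w.r.t. `⪯`. -/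
def IsIdealF3 (n : ℕ) (I : Set (Finset ℕ)) : Prop :=
  (∀ f ∈ I, memF3 n f) ∧
  ∀ f g : Finset ℕ, memF3 n f → g ∈ I → squeezedLE f g → f ∈ I

/-- `max ⋃ I`, the largest vertex used by the collection `I`. -/
noncomputable def maxVertex (I : Set (Finset ℕ)) : ℕ :=
  sSup (⋃ f ∈ I, (f : Set ℕ))

/-- `0 * K = {{0} ∪ f : f ∈ K}`. -/
def coneZero (K : Set (Finset ℕ)) : Set (Finset ℕ) := (insert 0) '' K

/-- A facet of the squeezed sphere `S(I)`: a 4-element set contained in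
exactly one member of `I`. -/
def isFacetOfS (I : Set (Finset ℕ)) (F : Finset ℕ) : Prop :=
  F.card = 4 ∧ ∃! g, g ∈ I ∧ F ⊆ g

/-- The gap of `(i,j) = {i, i+1, j, j+1}`, i.e. `j - i - 2`. -/
def gapOf (f : Finset ℕ) : ℕ :=
  f.sup id - (f.sort (· ≤ ·)).headI - 3

namespace SqzAux

lemma mem_pairSet {i j x : ℕ} : x ∈ pairSet i j ↔ x = i ∨ x = i + 1 ∨ x = j ∨ x = j + 1 := by
  simp [pairSet]

lemma pairSet_sort {i j : ℕ} (h : i + 2 ≤ j) :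
    (pairSet i j).sort (· ≤ ·) = [i, i + 1, j, j + 1] := by
  have e2 : Finset.sort (insert j ({j + 1} : Finset ℕ)) (· ≤ ·) = [j, j + 1] := by
    rw [Finset.sort_insert (· ≤ ·) (by intro b hb; simp at hb; omega)
      (by simp only [Finset.mem_singleton]; omega), Finset.sort_singleton]
  have e3 : Finset.sort (insert (i + 1) (insert j ({j + 1} : Finset ℕ))) (· ≤ ·)
      = [i + 1, j, j + 1] := by
    rw [Finset.sort_insert (· ≤ ·) (by intro b hb; simp at hb; omega)
      (by simp only [Finset.mem_insert, Finset.mem_singleton]; omega), e2]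
  have e4 : Finset.sort
      (insert i (insert (i + 1) (insert j ({j + 1} : Finset ℕ)))) (· ≤ ·) = [i, i + 1, j, j + 1] := by
    rw [Finset.sort_insert (· ≤ ·) (by intro b hb; simp at hb; omega)
      (by simp only [Finset.mem_insert, Finset.mem_singleton]; omega), e3]
  exact e4

lemma pairSet_inj {i j i' j' : ℕ} (h : i + 2 ≤ j) (h' : i' + 2 ≤ j')
    (he : pairSet i j = pairSet i' j') : i = i' ∧ j = j' := by
  have h1 : i ∈ pairSet i' j' := by rw [← he]; simp [pairSet]
  have h2 : i' ∈ pairSet i j := by rw [he]; simp [pairSet]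
  have h3 : j + 1 ∈ pairSet i' j' := by rw [← he]; simp [pairSet]
  have h4 : j' + 1 ∈ pairSet i j := by rw [he]; simp [pairSet]
  rw [mem_pairSet] at h1 h2 h3 h4
  omega

lemma squeezedLE_pair {i j i' j' : ℕ} (h : i + 2 ≤ j) (h' : i' + 2 ≤ j')
    (hii : i ≤ i') (hjj : j ≤ j') : squeezedLE (pairSet i j) (pairSet i' j') := by
  unfold squeezedLE
  rw [pairSet_sort h, pairSet_sort h']
  exact List.Forall₂.cons hii (List.Forall₂.cons (by omega)
    (List.Forall₂.cons hjj (List.Forall₂.cons (by omega) List.Forall₂.nil)))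

lemma prod_pairSet {i j : ℕ} (h : i + 2 ≤ j) (t : ℕ → ℝ) :
    ∏ x ∈ pairSet i j, t x = t i * t (i + 1) * t j * t (j + 1) := by
  rw [show pairSet i j = insert i (insert (i + 1) (insert j ({j + 1} : Finset ℕ))) from rfl]
  rw [Finset.prod_insert (by simp only [Finset.mem_insert, Finset.mem_singleton]; omega),
    Finset.prod_insert (by simp only [Finset.mem_insert, Finset.mem_singleton]; omega),
    Finset.prod_insert (by simp only [Finset.mem_singleton]; omega),
    Finset.prod_singleton]
  ring

/-- The weights: for `i ≤ m+1` a large negative value determined by the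
staircase function `C`; for `i ≥ m+2` the value `R^i`. -/
noncomputable def SV (R Q : ℝ) (m : ℕ) (C : ℕ → ℕ) (i : ℕ) : ℝ :=
  if i ≤ m + 1 then
    -(R ^ (C i + 1) * (1 + ((m + 2 - i : ℕ) : ℝ) / (4 * ((m : ℝ) + 2)))) -
      (if i = 1 then Q else 0)
  else R ^ i

variable {R Q : ℝ} {m : ℕ} {C : ℕ → ℕ}

lemma R_pos (hR : 8 * ((m : ℝ) + 2) ≤ R) : 0 < R := by
  have : (0 : ℝ) ≤ (m : ℝ) := Nat.cast_nonneg m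
  linarith

lemma R_ge_16 (hR : 8 * ((m : ℝ) + 2) ≤ R) : (16 : ℝ) ≤ R := by
  have : (0 : ℝ) ≤ (m : ℝ) := Nat.cast_nonneg m
  linarith

lemma beta_nonneg {i : ℕ} : 0 ≤ ((m + 2 - i : ℕ) : ℝ) / (4 * ((m : ℝ) + 2)) := by positivity

lemma beta_le (i : ℕ) : ((m + 2 - i : ℕ) : ℝ) / (4 * ((m : ℝ) + 2)) ≤ 1 / 4 := by
  have hd : (0 : ℝ) < 4 * ((m : ℝ) + 2) := by positivity
  rw [div_le_iff₀ hd]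
  have h2 : ((m + 2 - i : ℕ) : ℝ) ≤ (m : ℝ) + 2 := by
    have : (m + 2 - i : ℕ) ≤ m + 2 := by omega
    exact_mod_cast this
  linarith

lemma Rbeta_ge (hR : 8 * ((m : ℝ) + 2) ≤ R) {i : ℕ} (h : i ≤ m + 1) :
    2 ≤ R * (((m + 2 - i : ℕ) : ℝ) / (4 * ((m : ℝ) + 2))) := by
  have hd : (0 : ℝ) < 4 * ((m : ℝ) + 2) := by positivity
  have h1 : (1 : ℝ) ≤ ((m + 2 - i : ℕ) : ℝ) := by
    have : 1 ≤ m + 2 - i := by omega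
    exact_mod_cast this
  have hRpos := R_pos hR
  rw [← mul_div_assoc, le_div_iff₀ hd]
  nlinarith [mul_le_mul_of_nonneg_left h1 hRpos.le]

lemma ite_Q_nonneg (hQ : 0 ≤ Q) (i : ℕ) : 0 ≤ (if i = 1 then Q else 0) := by
  split_ifs
  · exact hQ
  · exact le_rfl

lemma SV_high {k : ℕ} (hk : m + 2 ≤ k) : SV R Q m C k = R ^ k := if_neg (by omega)

lemma SV_low {k : ℕ} (hk : k ≤ m + 1) : SV R Q m C k =
    -(R ^ (C k + 1) * (1 + ((m + 2 - k : ℕ) : ℝ) / (4 * ((m : ℝ) + 2)))) -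
      (if k = 1 then Q else 0) := if_pos hk

lemma SV_neg (hR : 8 * ((m : ℝ) + 2) ≤ R) (hQ : 0 ≤ Q) {k : ℕ} (hk : k ≤ m + 1) :
    SV R Q m C k < 0 := by
  rw [SV_low hk]
  have h1 : 0 < R ^ (C k + 1) := pow_pos (R_pos hR) _
  have h2 : 0 ≤ ((m + 2 - k : ℕ) : ℝ) / (4 * ((m : ℝ) + 2)) := beta_nonneg
  have h3 := ite_Q_nonneg hQ k
  nlinarith

lemma SV_one_le (hR : 8 * ((m : ℝ) + 2) ≤ R) (hQ : 0 ≤ Q) : SV R Q m C 1 ≤ -Q := by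
  rw [SV_low (by omega), if_pos rfl]
  have h1 : 0 < R ^ (C 1 + 1) := pow_pos (R_pos hR) _
  have h2 : 0 ≤ ((m + 2 - 1 : ℕ) : ℝ) / (4 * ((m : ℝ) + 2)) := beta_nonneg
  nlinarith

lemma SV_ge (hR : 8 * ((m : ℝ) + 2) ≤ R) {k : ℕ} (hk2 : 2 ≤ k) (hk : k ≤ m + 1) :
    -(R ^ (C k + 1) * (5 / 4)) ≤ SV R Q m C k := by
  rw [SV_low hk, if_neg (by omega)]
  have h1 : 0 < R ^ (C k + 1) := pow_pos (R_pos hR) _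
  have h2 := beta_le (m := m) k
  nlinarith

lemma SV_succ (hR : 8 * ((m : ℝ) + 2) ≤ R) (hQ : 0 ≤ Q)
    (hCmono : ∀ a b, 1 ≤ a → a ≤ b → b ≤ m + 1 → C b ≤ C a) {k : ℕ} (hk : 1 ≤ k) :
    SV R Q m C k < SV R Q m C (k + 1) := by
  have hRpos := R_pos hR
  have hR1 : (1 : ℝ) ≤ R := by linarith [R_ge_16 hR]
  rcases le_or_gt (k + 1) (m + 1) with h | h
  · rw [SV_low (show k ≤ m + 1 by omega), SV_low h,
      if_neg (show ¬(k + 1 = 1) by omega)]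
    have hpow : R ^ (C (k + 1) + 1) ≤ R ^ (C k + 1) := by
      apply pow_le_pow_right₀ hR1
      have := hCmono k (k + 1) hk (by omega) h
      omega
    have hb : ((m + 2 - (k + 1) : ℕ) : ℝ) < ((m + 2 - k : ℕ) : ℝ) := by
      have : m + 2 - (k + 1) < m + 2 - k := by omega
      exact_mod_cast this
    have hd : (0 : ℝ) < 4 * ((m : ℝ) + 2) := by positivity
    have hbb : ((m + 2 - (k + 1) : ℕ) : ℝ) / (4 * ((m : ℝ) + 2)) <
        ((m + 2 - k : ℕ) : ℝ) / (4 * ((m : ℝ) + 2)) := by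
      exact div_lt_div_of_pos_right hb hd
    have hmul : R ^ (C (k + 1) + 1) *
          (1 + ((m + 2 - (k + 1) : ℕ) : ℝ) / (4 * ((m : ℝ) + 2))) <
        R ^ (C k + 1) * (1 + ((m + 2 - k : ℕ) : ℝ) / (4 * ((m : ℝ) + 2))) := by
      apply mul_lt_mul' hpow (by linarith) (by positivity) (pow_pos hRpos _)
    have hq := ite_Q_nonneg hQ k
    linarith
  · rcases le_or_gt k (m + 1) with h2 | h2
    · rw [SV_high (show m + 2 ≤ k + 1 by omega)]
      have hneg := SV_neg (C := C) hR hQ h2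
      have hpos : (0 : ℝ) < R ^ (k + 1) := pow_pos hRpos _
      linarith
    · rw [SV_high (show m + 2 ≤ k by omega), SV_high (show m + 2 ≤ k + 1 by omega)]
      exact pow_lt_pow_right₀ (by linarith [R_ge_16 hR]) (by omega)

lemma SV_mono (hR : 8 * ((m : ℝ) + 2) ≤ R) (hQ : 0 ≤ Q)
    (hCmono : ∀ a b, 1 ≤ a → a ≤ b → b ≤ m + 1 → C b ≤ C a) {a b : ℕ}
    (ha : 1 ≤ a) (hab : a ≤ b) : SV R Q m C a ≤ SV R Q m C b := by
  induction b, hab using Nat.le_induction with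
  | base => exact le_rfl
  | succ b hb ih => exact ih.trans (SV_succ hR hQ hCmono (by omega)).le

lemma SV_memb (hR : 8 * ((m : ℝ) + 2) ≤ R) (hQ : 0 ≤ Q)
    (hClow : ∀ k, k ≤ m + 1 → m + 2 ≤ C k) {i : ℕ} (h1 : 1 ≤ i) (him : i ≤ m) :
    SV R Q m C i + SV R Q m C (i + 1) + SV R Q m C (C i) + SV R Q m C (C i + 1) < 0 := by
  have hq : m + 2 ≤ C i := hClow i (by omega)
  rw [SV_high hq, SV_high (show m + 2 ≤ C i + 1 by omega)]
  have hRpos := R_pos hR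
  have hpowq : 0 < R ^ C i := pow_pos hRpos _
  have e := SV_low (R := R) (Q := Q) (C := C) (show i ≤ m + 1 by omega)
  have hQi := ite_Q_nonneg hQ i
  have hneg := SV_neg (C := C) hR hQ (show i + 1 ≤ m + 1 by omega)
  have hRb := Rbeta_ge hR (show i ≤ m + 1 by omega)
  have key : 2 * R ^ C i ≤ R ^ (C i + 1) * (((m + 2 - i : ℕ) : ℝ) / (4 * ((m : ℝ) + 2))) := by
    rw [pow_succ]
    nlinarith [mul_le_mul_of_nonneg_left hRb hpowq.le]
  rw [e]
  have hsucc : R ^ (C i + 1) = R ^ C i * R := pow_succ R (C i)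
  nlinarith [key, hQi, hneg]

lemma SV_nonmemb_low (hR : 8 * ((m : ℝ) + 2) ≤ R) (hQ : 0 ≤ Q)
    (hCmono : ∀ a b, 1 ≤ a → a ≤ b → b ≤ m + 1 → C b ≤ C a)
    (hClow : ∀ k, k ≤ m + 1 → m + 2 ≤ C k) {i : ℕ} (h2 : 2 ≤ i) (him : i ≤ m) :
    0 < SV R Q m C i + SV R Q m C (i + 1) + SV R Q m C (C i + 1) + SV R Q m C (C i + 2) := by
  have hq : m + 2 ≤ C i := hClow i (by omega)
  have hRpos := R_pos hR
  have hR1 : (1 : ℝ) ≤ R := by linarith [R_ge_16 hR]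
  have h16 := R_ge_16 hR
  rw [SV_high (show m + 2 ≤ C i + 1 by omega), SV_high (show m + 2 ≤ C i + 2 by omega)]
  have ha := SV_ge (C := C) (Q := Q) hR h2 (show i ≤ m + 1 by omega)
  have hb := SV_ge (C := C) (Q := Q) hR (show 2 ≤ i + 1 by omega) (show i + 1 ≤ m + 1 by omega)
  have hcc : C (i + 1) ≤ C i := hCmono i (i + 1) (by omega) (by omega) (by omega)
  have hpowle : R ^ (C (i + 1) + 1) ≤ R ^ (C i + 1) := pow_le_pow_right₀ hR1 (by omega)
  have hp : 0 < R ^ (C i + 1) := pow_pos hRpos _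
  have hsucc2 : R ^ (C i + 2) = R ^ (C i + 1) * R := by
    rw [show C i + 2 = (C i + 1) + 1 from rfl, pow_succ]
  nlinarith [mul_le_mul_of_nonneg_left h16 hp.le]

lemma SV_nonmemb_high (hR : 8 * ((m : ℝ) + 2) ≤ R) (hQ : 0 ≤ Q) (hm : 1 ≤ m)
    (hCm1 : C (m + 1) = m + 2) {i : ℕ} (hi : m + 1 ≤ i) :
    0 < SV R Q m C i + SV R Q m C (i + 1) + SV R Q m C (i + 2) + SV R Q m C (i + 3) := by
  have hRpos := R_pos hR
  have h16 := R_ge_16 hR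
  rcases eq_or_lt_of_le hi with he | hlt
  · subst he
    rw [SV_high (show m + 2 ≤ m + 1 + 1 by omega), SV_high (show m + 2 ≤ m + 1 + 2 by omega),
      SV_high (show m + 2 ≤ m + 1 + 3 by omega)]
    have ha := SV_ge (C := C) (Q := Q) hR (show 2 ≤ m + 1 by omega) (le_refl (m + 1))
    rw [hCm1] at ha
    have hp2 : 0 < R ^ (m + 1 + 1) := pow_pos hRpos _
    have hp3 : 0 < R ^ (m + 1 + 2) := pow_pos hRpos _
    have hsucc : R ^ (m + 1 + 3) = R ^ (m + 1 + 2) * R := by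
      rw [show m + 1 + 3 = (m + 1 + 2) + 1 from rfl, pow_succ]
    have he23 : R ^ (m + 2 + 1) = R ^ (m + 1 + 2) := by norm_num [show m + 2 + 1 = m + 1 + 2 by omega]
    rw [he23] at ha
    nlinarith [mul_le_mul_of_nonneg_left h16 hp3.le]
  · have h4 : m + 2 ≤ i := hlt
    rw [SV_high (by omega), SV_high (by omega), SV_high (by omega), SV_high (by omega)]
    have p0 : 0 < R ^ i := pow_pos hRpos _
    have p1 : 0 < R ^ (i + 1) := pow_pos hRpos _
    have p2 : 0 < R ^ (i + 2) := pow_pos hRpos _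
    have p3 : 0 < R ^ (i + 3) := pow_pos hRpos _
    linarith

lemma SV_le_bound (hR : 8 * ((m : ℝ) + 2) ≤ R) (hQ : 0 ≤ Q) {k n : ℕ} (hk : k ≤ n) :
    SV R Q m C k ≤ R ^ n := by
  rcases le_or_gt k (m + 1) with h | h
  · have h1 := SV_neg (C := C) hR hQ h
    have h2 : (0 : ℝ) < R ^ n := pow_pos (R_pos hR) _
    linarith
  · rw [SV_high (by omega)]
    exact pow_le_pow_right₀ (by linarith [R_ge_16 hR]) hk

end SqzAux

open SqzAux in
/-- **Step 1 and Step 2 of the realization.** For any order ideal `I'` of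
`F₃(n)` with `max ⋃ I' = n` and any `N' > 0`, `ε₀ > 0`, there are reals
`0 < t₁ < t₂ < ⋯ < t_n` with `t₁ < ε₀` such that `∏_{i ∈ f} t_i < N'` for all
`f ∈ I'`, `∏_{i ∈ f} t_i > N'` for all `f ∈ F₃(n) ∖ I'`, and moreover
`t₁ t_{n-2} t_{n-1} t_n < N'`. -/
theorem realization_step_one_two (n : ℕ) (hn : 4 ≤ n)
    (I : Set (Finset ℕ)) (hI : IsIdealF3 n I) (hmax : maxVertex I = n)
    (N' ε₀ : ℝ) (hN' : 0 < N') (hε₀ : 0 < ε₀) :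
    ∃ t : ℕ → ℝ, 0 < t 1 ∧ (∀ i : ℕ, 1 ≤ i → i < n → t i < t (i + 1)) ∧
      t 1 < ε₀ ∧
      (∀ f ∈ I, (∏ i ∈ f, t i) < N') ∧
      (∀ f : Finset ℕ, memF3 n f → f ∉ I → N' < ∏ i ∈ f, t i) ∧
      t 1 * t (n - 2) * t (n - 1) * t n < N' := by
  classical
  obtain ⟨hIF, hId⟩ := hI
  -- `n` is a vertex of some member of `I`, hence `(1, n-1) ∈ I`.
  have hSbdd : BddAbove (⋃ f ∈ I, (f : Set ℕ)) := by
    refine ⟨n, ?_⟩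
    rintro x hx
    simp only [Set.mem_iUnion] at hx
    obtain ⟨f, hf, hxf⟩ := hx
    obtain ⟨i, j, hi1, hij, hjn, rfl⟩ := hIF f hf
    have hx' : x ∈ pairSet i j := hxf
    rw [mem_pairSet] at hx'
    omega
  have hSne : (⋃ f ∈ I, (f : Set ℕ)).Nonempty := by
    by_contra hcon
    rw [Set.not_nonempty_iff_eq_empty] at hcon
    have hmax' : sSup (⋃ f ∈ I, (f : Set ℕ)) = n := hmax
    rw [hcon] at hmax'
    simp at hmax'
    omega
  have hnS : n ∈ ⋃ f ∈ I, (f : Set ℕ) := by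
    have h := Nat.sSup_mem hSne hSbdd
    have hmax' : sSup (⋃ f ∈ I, (f : Set ℕ)) = n := hmax
    rwa [hmax'] at h
  rw [Set.mem_iUnion₂] at hnS
  obtain ⟨f0, hf0I, hnf0⟩ := hnS
  obtain ⟨i0, j0, hi01, hij0, hj0n, rfl⟩ := hIF f0 hf0I
  have hj0 : j0 = n - 1 := by
    have hx' : n ∈ pairSet i0 j0 := hnf0
    rw [mem_pairSet] at hx'
    omega
  subst hj0
  have hn1 : pairSet 1 (n - 1) ∈ I :=
    hId _ _ ⟨1, n - 1, le_rfl, by omega, by omega, rfl⟩ hf0I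
      (squeezedLE_pair (by omega) (by omega) hi01 le_rfl)
  have h13 : pairSet 1 3 ∈ I :=
    hId _ _ ⟨1, 3, le_rfl, le_rfl, by omega, rfl⟩ hn1
      (squeezedLE_pair (by omega) (by omega) le_rfl (by omega))
  -- the staircase data
  set m := Nat.findGreatest (fun i => pairSet i (i + 2) ∈ I) n with hm_def
  have hm1 : 1 ≤ m := Nat.le_findGreatest (P := fun i => pairSet i (i + 2) ∈ I)
    (by omega) (show pairSet 1 (1 + 2) ∈ I from h13)
  have hmP : pairSet m (m + 2) ∈ I :=
    Nat.findGreatest_spec (P := fun i => pairSet i (i + 2) ∈ I)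
      (show 1 ≤ n by omega) (show pairSet 1 (1 + 2) ∈ I from h13)
  have hm3 : m + 3 ≤ n := by
    obtain ⟨i', j', hi', hij', hj', he⟩ := hIF _ hmP
    obtain ⟨e1, e2⟩ := pairSet_inj (by omega) hij' he
    omega
  have hrow : ∀ i, 1 ≤ i → i ≤ m → pairSet i (i + 2) ∈ I := fun i h1 h2 =>
    hId _ _ ⟨i, i + 2, h1, le_rfl, by omega, rfl⟩ hmP
      (squeezedLE_pair (by omega) (by omega) h2 (by omega))
  have hmmax : ∀ i, 1 ≤ i → pairSet i (i + 2) ∈ I → i ≤ m := by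
    intro i h1 hP
    obtain ⟨i', j', hi', hij', hj', he⟩ := hIF _ hP
    obtain ⟨e1, e2⟩ := pairSet_inj (by omega) hij' he
    exact Nat.le_findGreatest (P := fun i => pairSet i (i + 2) ∈ I) (by omega) hP
  set c : ℕ → ℕ := fun i => Nat.findGreatest (fun j => pairSet i j ∈ I) n with hc_def
  have hci_ge : ∀ i, 1 ≤ i → i ≤ m → i + 2 ≤ c i := fun i h1 h2 =>
    Nat.le_findGreatest (P := fun j => pairSet i j ∈ I) (by omega) (hrow i h1 h2)
  have hci_mem : ∀ i, 1 ≤ i → i ≤ m → pairSet i (c i) ∈ I := fun i h1 h2 =>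
    Nat.findGreatest_spec (P := fun j => pairSet i j ∈ I)
      (show i + 2 ≤ n by omega) (hrow i h1 h2)
  have hci_le : ∀ i, 1 ≤ i → i ≤ m → c i + 1 ≤ n := by
    intro i h1 h2
    have hge := hci_ge i h1 h2
    obtain ⟨i', j', hi', hij', hj', he⟩ := hIF _ (hci_mem i h1 h2)
    obtain ⟨e1, e2⟩ := pairSet_inj (by omega) hij' he
    omega
  have hcmax : ∀ i j, pairSet i j ∈ I → j ≤ n → j ≤ c i := fun i j hP hj =>
    Nat.le_findGreatest (P := fun j => pairSet i j ∈ I) hj hP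
  have hcmono : ∀ a b, 1 ≤ a → a ≤ b → b ≤ m → c b ≤ c a := by
    intro a b ha hab hbm
    have hmemb := hci_mem b (by omega) hbm
    have hcb := hci_ge b (by omega) hbm
    have hcbn := hci_le b (by omega) hbm
    have hIa : pairSet a (c b) ∈ I :=
      hId _ _ ⟨a, c b, ha, by omega, hcbn, rfl⟩ hmemb
        (squeezedLE_pair (by omega) (by omega) hab le_rfl)
    exact hcmax a (c b) hIa (by omega)
  have hc1 : c 1 = n - 1 := by
    have hle : c 1 + 1 ≤ n := hci_le 1 le_rfl hm1
    have hge : n - 1 ≤ c 1 := hcmax 1 (n - 1) hn1 (by omega)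
    omega
  have hmem_iff : ∀ i j, 1 ≤ i → i + 2 ≤ j → j + 1 ≤ n →
      (pairSet i j ∈ I ↔ i ≤ m ∧ j ≤ c i) := by
    intro i j h1 hij hjn
    constructor
    · intro hP
      refine ⟨hmmax i h1 (hId _ _ ⟨i, i + 2, h1, le_rfl, by omega, rfl⟩ hP
        (squeezedLE_pair (by omega) hij le_rfl hij)), hcmax i j hP (by omega)⟩
    · rintro ⟨him, hjc⟩
      exact hId _ _ ⟨i, j, h1, hij, hjn, rfl⟩ (hci_mem i h1 him)
        (squeezedLE_pair hij (hci_ge i h1 him) le_rfl hjc)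
  -- the extended staircase
  set C : ℕ → ℕ := fun k => if 1 ≤ k ∧ k ≤ m then c k else m + 2 with hC_def
  have hCeq : ∀ k, 1 ≤ k → k ≤ m → C k = c k := by
    intro k h1 h2
    simp only [hC_def]
    rw [if_pos ⟨h1, h2⟩]
  have hClow : ∀ k, k ≤ m + 1 → m + 2 ≤ C k := by
    intro k hk
    by_cases h : 1 ≤ k ∧ k ≤ m
    · simp only [hC_def]
      rw [if_pos h]
      have h5 := hcmono k m h.1 h.2 le_rfl
      have h6 := hci_ge m hm1 le_rfl
      omega
    · simp only [hC_def]
      rw [if_neg h]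
  have hCm1 : C (m + 1) = m + 2 := by
    simp only [hC_def]
    rw [if_neg (by omega)]
  have hCmono : ∀ a b, 1 ≤ a → a ≤ b → b ≤ m + 1 → C b ≤ C a := by
    intro a b ha hab hbm
    rcases le_or_gt b m with hb | hb
    · rw [hCeq a ha (by omega), hCeq b (by omega) hb]
      exact hcmono a b ha hab hb
    · have hb1 : b = m + 1 := by omega
      rw [hb1, hCm1]
      exact hClow a (by omega)
  have hC1 : C 1 = n - 1 := by rw [hCeq 1 le_rfl hm1, hc1]
  -- the real parameters
  set R : ℝ := 8 * ((m : ℝ) + 2) with hR_def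
  have hR : 8 * ((m : ℝ) + 2) ≤ R := le_of_eq hR_def.symm
  have hRpos : 0 < R := R_pos hR
  set L : ℝ := Real.log N' with hL_def
  set Q : ℝ := R ^ (3 * n) + 1 + max 0 (L / 4 - Real.log ε₀) with hQ_def
  have hQ : 0 ≤ Q := by
    have h1 : (0 : ℝ) < R ^ (3 * n) := pow_pos hRpos _
    have h2 := le_max_left (0 : ℝ) (L / 4 - Real.log ε₀)
    rw [hQ_def]; linarith
  set t : ℕ → ℝ := fun k => Real.exp (SV R Q m C k + L / 4) with ht_def
  have hNexp : Real.exp L = N' := Real.exp_log hN'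
  have hprod : ∀ i j : ℕ, i + 2 ≤ j → ∏ x ∈ pairSet i j, t x =
      Real.exp (SV R Q m C i + SV R Q m C (i + 1) + SV R Q m C j + SV R Q m C (j + 1) + L) := by
    intro i j hij
    rw [prod_pairSet hij t]
    simp only [ht_def]
    rw [← Real.exp_add, ← Real.exp_add, ← Real.exp_add]
    congr 1
    ring
  refine ⟨t, ?_, ?_, ?_, ?_, ?_, ?_⟩
  · exact Real.exp_pos _
  · intro i h1 _
    simp only [ht_def]
    exact Real.exp_lt_exp.mpr (by linarith [SV_succ (C := C) hR hQ hCmono h1])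
  · -- t 1 < ε₀
    have hs1 : SV R Q m C 1 ≤ -Q := SV_one_le hR hQ
    have hmax0 : L / 4 - Real.log ε₀ ≤ max 0 (L / 4 - Real.log ε₀) := le_max_right _ _
    have hpow : (0 : ℝ) < R ^ (3 * n) := pow_pos hRpos _
    have hlt : SV R Q m C 1 + L / 4 < Real.log ε₀ := by
      rw [hQ_def] at hs1
      linarith
    calc t 1 = Real.exp (SV R Q m C 1 + L / 4) := by simp only [ht_def]
    _ < Real.exp (Real.log ε₀) := Real.exp_lt_exp.mpr hlt
    _ = ε₀ := Real.exp_log hε₀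
  · -- members
    intro f hf
    obtain ⟨i, j, h1, hij, hjn, rfl⟩ := hIF f hf
    obtain ⟨him, hjc⟩ := (hmem_iff i j h1 hij hjn).mp hf
    rw [hprod i j hij, ← hNexp]
    apply Real.exp_lt_exp.mpr
    have hCi := hCeq i h1 him
    have h4 := SV_memb (C := C) hR hQ hClow h1 him
    have hj1 : SV R Q m C j ≤ SV R Q m C (C i) :=
      SV_mono hR hQ hCmono (show 1 ≤ j by omega) (by omega)
    have hj2 : SV R Q m C (j + 1) ≤ SV R Q m C (C i + 1) :=
      SV_mono hR hQ hCmono (show 1 ≤ j + 1 by omega) (by omega)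
    linarith
  · -- non-members
    intro f hmemf hfI
    obtain ⟨i, j, h1, hij, hjn, rfl⟩ := hmemf
    have hnot : ¬(i ≤ m ∧ j ≤ c i) := fun h => hfI ((hmem_iff i j h1 hij hjn).mpr h)
    rw [hprod i j hij, ← hNexp]
    apply Real.exp_lt_exp.mpr
    rcases le_or_gt i m with him | him
    · have hjc : c i + 1 ≤ j := by
        by_contra hcn
        exact hnot ⟨him, by omega⟩
      have hi2 : 2 ≤ i := by
        by_contra hcn
        have hi1 : i = 1 := by omega
        rw [hi1, hc1] at hjc
        omega
      have hCi := hCeq i h1 him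
      have key := SV_nonmemb_low (C := C) hR hQ hCmono hClow hi2 him
      have hj1 : SV R Q m C (C i + 1) ≤ SV R Q m C j :=
        SV_mono hR hQ hCmono (by omega) (by omega)
      have hj2 : SV R Q m C (C i + 2) ≤ SV R Q m C (j + 1) :=
        SV_mono hR hQ hCmono (by omega) (by omega)
      linarith
    · have key := SV_nonmemb_high (C := C) hR hQ hm1 hCm1 (show m + 1 ≤ i by omega)
      have hj1 : SV R Q m C (i + 2) ≤ SV R Q m C j :=
        SV_mono hR hQ hCmono (by omega) hij
      have hj2 : SV R Q m C (i + 3) ≤ SV R Q m C (j + 1) :=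
        SV_mono hR hQ hCmono (by omega) (by omega)
      linarith
  · -- the extra condition
    have e : t 1 * t (n - 2) * t (n - 1) * t n =
        Real.exp (SV R Q m C 1 + SV R Q m C (n - 2) + SV R Q m C (n - 1) + SV R Q m C n + L) := by
      simp only [ht_def]
      rw [← Real.exp_add, ← Real.exp_add, ← Real.exp_add]
      congr 1
      ring
    rw [e, ← hNexp]
    apply Real.exp_lt_exp.mpr
    have hs1 : SV R Q m C 1 ≤ -Q := SV_one_le hR hQ
    have hQge : R ^ (3 * n) ≤ Q := by
      have h2 := le_max_left (0 : ℝ) (L / 4 - Real.log ε₀)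
      rw [hQ_def]; linarith
    have hb2 : SV R Q m C (n - 2) ≤ R ^ n := SV_le_bound hR hQ (by omega)
    have hb3 : SV R Q m C (n - 1) ≤ R ^ n := SV_le_bound hR hQ (by omega)
    have hb4 : SV R Q m C n ≤ R ^ n := SV_le_bound hR hQ le_rfl
    have hsplit : R ^ (3 * n) = R ^ n * R ^ n * R ^ n := by
      rw [show 3 * n = n + n + n by ring, pow_add, pow_add]
    have hRn : (16 : ℝ) ≤ R ^ n :=
      le_trans (R_ge_16 hR) (le_self_pow₀ (by linarith [R_ge_16 hR]) (by omega))
    have hRnpos : (0 : ℝ) < R ^ n := pow_pos hRpos _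
    nlinarith [mul_le_mul_of_nonneg_left hRn hRnpos.le, hRnpos]
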